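/- Let p be a prime and n ≥ 0 with standard base-p digits n_0, n_1, …, n_ℓ (least significant first). Define T_p(n, x) = Σ_{m=0}^{n} x^{ν_p(C(n,m))}, and for each d ∈ {0,…,p−1} let M_p(d) be the 2×2 matrix over ℤ[x] with rows [d+1, p−d−1] and [d·x, (p−d)·x]. Then T_p(n, x) = [1, 0] · M_p(n_0) · M_p(n_1) ⋯ M_p(n_ℓ) · [1, 0]^T. -/

import Mathlib

open Polynomial

/-- `T p n` is the polynomial `∑_{m=0}^{n} x^{ν_p(C(n,m))}`. -/
noncomputable def T (p n : ℕ) : Polynomial ℤ :=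
  ∑ m ∈ Finset.range (n + 1), X ^ padicValNat p (n.choose m)

/-- The matrix `M_p(d)` with rows `[d+1, p−d−1]` and `[d·x, (p−d)·x]`. -/
noncomputable def M (p d : ℕ) : Matrix (Fin 2) (Fin 2) (Polynomial ℤ) :=
  !![C ((d : ℤ) + 1), C ((p : ℤ) - d - 1);
     C (d : ℤ) * X, C ((p : ℤ) - d) * X]


namespace TMP

lemma mod_mul_decomp {p P : ℕ} (hp : 0 < p) (hP : 0 < P) (m : ℕ) :
    m % (p * P) = m % p + p * (m / p % P) := by
  conv_lhs => rw [← Nat.div_add_mod m p, Nat.add_mod, Nat.mul_mod_mul_left]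
  have h1 : m % p % (p * P) = m % p :=
    Nat.mod_eq_of_lt (lt_of_lt_of_le (Nat.mod_lt _ hp) (Nat.le_mul_of_pos_right _ hP))
  rw [h1]
  have h2 : p * (m / p % P) + m % p < p * P := by
    have a1 : m / p % P < P := Nat.mod_lt _ hP
    have a2 : m % p < p := Nat.mod_lt _ hp
    calc p * (m / p % P) + m % p < p * (m / p % P) + p := by omega
      _ = p * (m / p % P + 1) := by ring
      _ ≤ p * P := Nat.mul_le_mul_left _ (by omega)
  rw [Nat.mod_eq_of_lt h2, Nat.add_comm]

lemma sub_decomp_le {p n m : ℕ} (hp : 0 < p) (hm : m ≤ n) (he : m % p ≤ n % p) :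
    (n - m) % p = n % p - m % p ∧ (n - m) / p = n / p - m / p := by
  have hq : m / p ≤ n / p := Nat.div_le_div_right hm
  have h1 := Nat.div_add_mod n p
  have h2 := Nat.div_add_mod m p
  have h3 : p * (n / p - m / p) = p * (n / p) - p * (m / p) := Nat.mul_sub _ _ _
  have h4 : p * (m / p) ≤ p * (n / p) := Nat.mul_le_mul_left _ hq
  have hd : n % p < p := Nat.mod_lt _ hp
  have key : n - m = (n % p - m % p) + p * (n / p - m / p) := by omega
  have hlt : n % p - m % p < p := by omega
  constructor
  · rw [key, Nat.add_mul_mod_self_left, Nat.mod_eq_of_lt hlt]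
  · rw [key, Nat.add_mul_div_left _ _ hp, Nat.div_eq_of_lt hlt, Nat.zero_add]

lemma sub_decomp_gt {p n m : ℕ} (hp : 0 < p) (hm : m ≤ n) (he : n % p < m % p) :
    (n - m) % p = p + n % p - m % p ∧ (n - m) / p = n / p - m / p - 1 ∧ m / p < n / p := by
  have hq : m / p ≤ n / p := Nat.div_le_div_right hm
  have h1 := Nat.div_add_mod n p
  have h2 := Nat.div_add_mod m p
  have hd : n % p < p := Nat.mod_lt _ hp
  have hec : m % p < p := Nat.mod_lt _ hp
  have hlt : m / p < n / p := by
    rcases Nat.lt_or_ge (m / p) (n / p) with h | h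
    · exact h
    · exfalso
      have : m / p = n / p := le_antisymm hq h
      have : p * (m / p) = p * (n / p) := by rw [this]
      omega
  have h3 : p * (n / p - m / p) = p * (n / p) - p * (m / p) := Nat.mul_sub _ _ _
  have h3' : p * (n / p - m / p - 1) = p * (n / p - m / p) - p * 1 := by
    rw [← Nat.mul_sub]
  have h4 : p * (m / p + 1) ≤ p * (n / p) := Nat.mul_le_mul_left _ hlt
  have h5 : p * (m / p + 1) = p * (m / p) + p := by ring
  have key : n - m = (p + n % p - m % p) + p * (n / p - m / p - 1) := by omega
  have hlt2 : p + n % p - m % p < p := by omega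
  refine ⟨?_, ?_, hlt⟩
  · rw [key, Nat.add_mul_mod_self_left, Nat.mod_eq_of_lt hlt2]
  · rw [key, Nat.add_mul_div_left _ _ hp, Nat.div_eq_of_lt hlt2, Nat.zero_add]

lemma sum_mod_dichotomy {P u k : ℕ} (hP : 0 < P) (hm : u ≤ k) :
    u % P + (k - u) % P = k % P ∨ u % P + (k - u) % P = k % P + P := by
  set s := u % P + (k - u) % P with hs_def
  have hs : s % P = k % P := by
    rw [hs_def, ← Nat.add_mod]
    congr 1
    omega
  have h2 : s < 2 * P := by
    have := Nat.mod_lt u hP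
    have := Nat.mod_lt (k - u) hP
    omega
  have h3 : s / P < 2 := (Nat.div_lt_iff_lt_mul hP).mpr h2
  have h4 := Nat.div_add_mod s P
  interval_cases h : s / P <;> omega

lemma overflow_iff {P u k : ℕ} (hP : 0 < P) (hm : u ≤ k) :
    P ≤ u % P + (k - u) % P ↔ k % P < u % P := by
  have h1 := Nat.mod_lt u hP
  have h2 := Nat.mod_lt (k - u) hP
  have h3 := Nat.mod_lt k hP
  rcases sum_mod_dichotomy hP hm with h | h <;> omega

lemma overflow_cin_iff {P u k : ℕ} (hP : 0 < P) (hm : u ≤ k) :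
    P ≤ u % P + (k - u) % P + 1 ↔ (k + 1) % P ≤ u % P := by
  have h1 := Nat.mod_lt u hP
  have h2 := Nat.mod_lt (k - u) hP
  have h3 := Nat.mod_lt k hP
  rcases eq_or_lt_of_le (show 1 ≤ P from hP) with hP1 | hP2
  · simp [← hP1, Nat.mod_one]
  have hk1 : (k + 1) % P = (k % P + 1) % P := by
    rw [Nat.add_mod, Nat.mod_eq_of_lt hP2]
  rcases Nat.lt_or_ge (k % P + 1) P with h5 | h5
  · rw [Nat.mod_eq_of_lt h5] at hk1
    rcases sum_mod_dichotomy hP hm with h | h <;> omega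
  · have h6 : k % P + 1 = P := by omega
    have h7 : (k + 1) % P = 0 := by rw [hk1, h6, Nat.mod_self]
    rcases sum_mod_dichotomy hP hm with h | h <;> omega

lemma overflow_cin_iff' {P u k : ℕ} (hP : 0 < P) (hm : u < k) :
    P ≤ u % P + (k - u - 1) % P + 1 ↔ k % P ≤ u % P := by
  have h := overflow_cin_iff hP (u := u) (k := k - 1) (by omega)
  rw [show k - 1 - u = k - u - 1 from by omega, show k - 1 + 1 = k from by omega] at h
  exact h

lemma cmp_lt {p d e C A : ℕ} (hd : d < p) (he : e < p) (h : e < d) :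
    d + p * C ≤ e + p * A ↔ C < A := by
  constructor
  · intro h'
    by_contra hc
    push_neg at hc
    have := Nat.mul_le_mul_left p hc
    omega
  · intro h'
    have h2 : p * (C + 1) ≤ p * A := Nat.mul_le_mul_left p h'
    have h3 : p * (C + 1) = p * C + p := by ring
    omega

lemma cmp_le {p d e C A : ℕ} (hd : d < p) (he : e < p) (h : d ≤ e) :
    d + p * C ≤ e + p * A ↔ C ≤ A := by
  constructor
  · intro h'
    by_contra hc
    push_neg at hc
    have h2 : p * (A + 1) ≤ p * C := Nat.mul_le_mul_left p hc
    have h3 : p * (A + 1) = p * A + p := by ring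
    omega
  · intro h'
    have := Nat.mul_le_mul_left p h'
    omega

lemma mul_le_digit_iff {p P d S : ℕ} (hd : d < p) : p * P ≤ d + p * S ↔ P ≤ S := by
  constructor
  · intro h
    by_contra hc
    push_neg at hc
    have h2 : p * P ≥ p * (S + 1) := Nat.mul_le_mul_left p hc
    have h3 : p * (S + 1) = p * S + p := by ring
    omega
  · intro h
    have := Nat.mul_le_mul_left p h
    omega


section
variable {p n m : ℕ}

lemma condK_le (hp : 1 < p) (hm : m ≤ n) (he : m % p ≤ n % p) (i : ℕ) :
    (p^(i+1) ≤ m % p^(i+1) + (n-m) % p^(i+1))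
      ↔ (p^i ≤ m/p % p^i + (n/p - m/p) % p^i) := by
  have hp0 : 0 < p := by omega
  have hP : 0 < p^i := pow_pos hp0 i
  obtain ⟨hsm, hsd⟩ := sub_decomp_le hp0 hm he
  rw [pow_succ' p i, mod_mul_decomp hp0 hP, mod_mul_decomp hp0 hP, hsm, hsd]
  have key := mul_le_digit_iff (p := p) (P := p^i) (d := n % p)
    (S := m/p % p^i + (n/p - m/p) % p^i) (Nat.mod_lt _ hp0)
  have hmul : p * (m/p % p^i + (n/p - m/p) % p^i)
      = p * (m/p % p^i) + p * ((n/p - m/p) % p^i) := Nat.mul_add _ _ _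
  constructor
  · intro h; exact key.mp (by omega)
  · intro h; have := key.mpr h; omega

lemma condK_gt (hp : 1 < p) (hm : m ≤ n) (he : n % p < m % p) (i : ℕ) :
    (p^(i+1) ≤ m % p^(i+1) + (n-m) % p^(i+1))
      ↔ (n/p % p^i ≤ m/p % p^i) := by
  have hp0 : 0 < p := by omega
  have hP : 0 < p^i := pow_pos hp0 i
  obtain ⟨hsm, hsd, hlt⟩ := sub_decomp_gt hp0 hm he
  rw [pow_succ' p i, mod_mul_decomp hp0 hP, mod_mul_decomp hp0 hP, hsm, hsd]
  have key := mul_le_digit_iff (p := p) (P := p^i) (d := n % p)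
    (S := 1 + m/p % p^i + (n/p - m/p - 1) % p^i) (Nat.mod_lt _ hp0)
  have hmul : p * (1 + m/p % p^i + (n/p - m/p - 1) % p^i)
      = p + p * (m/p % p^i) + p * ((n/p - m/p - 1) % p^i) := by ring
  have hcin := overflow_cin_iff' (P := p^i) hP hlt
  have hd := Nat.mod_lt n hp0
  have hec := Nat.mod_lt m hp0
  constructor
  · intro h
    have := key.mp (by omega)
    exact hcin.mp (by omega)
  · intro h
    have h2 := hcin.mpr h
    have := key.mpr (by omega)
    omega

lemma condG_lt (hp : 1 < p) (hm : m ≤ n) (he : m % p < n % p) (i : ℕ) :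
    (n % p^(i+1) ≤ m % p^(i+1))
      ↔ (p^i ≤ m/p % p^i + (n/p - m/p) % p^i) := by
  have hp0 : 0 < p := by omega
  have hP : 0 < p^i := pow_pos hp0 i
  rw [pow_succ' p i, mod_mul_decomp hp0 hP, mod_mul_decomp hp0 hP]
  have hcmp := cmp_lt (p := p) (C := n/p % p^i) (A := m/p % p^i)
    (Nat.mod_lt n hp0) (Nat.mod_lt m hp0) he
  have hov := overflow_iff (P := p^i) hP (u := m/p) (k := n/p) (Nat.div_le_div_right hm)
  exact hcmp.trans hov.symm

lemma condG_ge (hp : 1 < p) (he : n % p ≤ m % p) (i : ℕ) :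
    (n % p^(i+1) ≤ m % p^(i+1)) ↔ (n/p % p^i ≤ m/p % p^i) := by
  have hp0 : 0 < p := by omega
  have hP : 0 < p^i := pow_pos hp0 i
  rw [pow_succ' p i, mod_mul_decomp hp0 hP, mod_mul_decomp hp0 hP]
  exact cmp_le (Nat.mod_lt n hp0) (Nat.mod_lt m hp0) he

end

/-- number of carries (when adding `m` and `n - m` in base `p`), counted up to digit `b`. -/
def Kc (p n m b : ℕ) : ℕ :=
  ∑ j ∈ Finset.range b, if p^(j+1) ≤ m % p^(j+1) + (n-m) % p^(j+1) then 1 else 0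

/-- number of carries when adding `m` and `n - 1 - m` with a carry coming in. -/
def Gc (p n m b : ℕ) : ℕ :=
  ∑ j ∈ Finset.range b, if n % p^(j+1) ≤ m % p^(j+1) then 1 else 0

section
variable {p n m : ℕ}

lemma Kc_rec_le (hp : 1 < p) (hm : m ≤ n) (he : m % p ≤ n % p) (b : ℕ) :
    Kc p n m (b+1) = Kc p (n/p) (m/p) b := by
  have hp0 : 0 < p := by omega
  rw [Kc, Kc, Finset.sum_range_succ']
  have h0 : ¬ (p^(0+1) ≤ m % p^(0+1) + (n-m) % p^(0+1)) := by
    simp only [zero_add, pow_one]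
    rw [(sub_decomp_le hp0 hm he).1]
    have := Nat.mod_lt n hp0
    omega
  rw [if_neg h0, add_zero]
  exact Finset.sum_congr rfl fun j _ => if_congr (condK_le hp hm he (j+1)) rfl rfl

lemma Kc_rec_gt (hp : 1 < p) (hm : m ≤ n) (he : n % p < m % p) (b : ℕ) :
    Kc p n m (b+1) = Gc p (n/p) (m/p) b + 1 := by
  have hp0 : 0 < p := by omega
  rw [Kc, Gc, Finset.sum_range_succ']
  have h0 : (p^(0+1) ≤ m % p^(0+1) + (n-m) % p^(0+1)) := by
    simp only [zero_add, pow_one]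
    rw [(sub_decomp_gt hp0 hm he).1]
    have := Nat.mod_lt m hp0
    omega
  rw [if_pos h0]
  congr 1
  exact Finset.sum_congr rfl fun j _ => if_congr (condK_gt hp hm he (j+1)) rfl rfl

lemma Gc_rec_lt (hp : 1 < p) (hm : m ≤ n) (he : m % p < n % p) (b : ℕ) :
    Gc p n m (b+1) = Kc p (n/p) (m/p) b := by
  rw [Gc, Kc, Finset.sum_range_succ']
  have h0 : ¬ (n % p^(0+1) ≤ m % p^(0+1)) := by
    simp only [zero_add, pow_one]; omega
  rw [if_neg h0, add_zero]
  exact Finset.sum_congr rfl fun j _ => if_congr (condG_lt hp hm he (j+1)) rfl rfl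

lemma Gc_rec_ge (hp : 1 < p) (he : n % p ≤ m % p) (b : ℕ) :
    Gc p n m (b+1) = Gc p (n/p) (m/p) b + 1 := by
  rw [Gc, Gc, Finset.sum_range_succ']
  have h0 : (n % p^(0+1) ≤ m % p^(0+1)) := by
    simp only [zero_add, pow_one]; omega
  rw [if_pos h0]
  congr 1
  exact Finset.sum_congr rfl fun j _ => if_congr (condG_ge hp he (j+1)) rfl rfl

lemma Kc_zero (b : ℕ) (hp : 0 < p) : Kc p 0 0 b = 0 := by
  rw [Kc]
  refine Finset.sum_eq_zero fun j _ => ?_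
  have : 0 < p^(j+1) := pow_pos hp _
  simp only [Nat.zero_mod, Nat.zero_sub, Nat.sub_zero]
  exact if_neg (by omega)

end

noncomputable def Tb (p n b : ℕ) : Polynomial ℤ :=
  ∑ m ∈ Finset.range (n+1), X ^ (Kc p n m b)
noncomputable def Sb (p n b : ℕ) : Polynomial ℤ :=
  ∑ m ∈ Finset.range n, X ^ (1 + Gc p n m b)

lemma sum_range_mul {β : Type*} [AddCommMonoid β] (f : ℕ → β) (p q : ℕ) :
    ∑ i ∈ Finset.range (p*q), f i = ∑ m ∈ Finset.range q, ∑ e ∈ Finset.range p, f (p*m + e) := by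
  induction q with
  | zero => simp
  | succ q ih => rw [Nat.mul_succ, Finset.sum_range_add, ih, Finset.sum_range_succ]

lemma Tb_rec {p n : ℕ} (hp : 1 < p) (hn : 0 < n) (b : ℕ) :
    Tb p n (b+1) = (n % p + 1) • Tb p (n/p) b + (p - n % p - 1) • Sb p (n/p) b := by
  have hp0 : 0 < p := by omega
  have hd : n % p < p := Nat.mod_lt _ hp0
  have hnd := Nat.div_add_mod n p
  rw [Tb]
  rw [show n + 1 = p * (n/p) + (n % p + 1) from by omega, Finset.sum_range_add, sum_range_mul]
  have hmodd : ∀ m' e : ℕ, e < p → (p * m' + e) % p = e := by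
    intro m' e he
    rw [Nat.mul_add_mod]
    exact Nat.mod_eq_of_lt he
  have hdivd : ∀ m' e : ℕ, e < p → (p * m' + e) / p = m' := by
    intro m' e he
    rw [Nat.mul_add_div hp0, Nat.div_eq_of_lt he, Nat.add_zero]
  have inner : ∀ m' ∈ Finset.range (n/p),
      (∑ e ∈ Finset.range p, (X:Polynomial ℤ) ^ Kc p n (p * m' + e) (b+1))
        = (n % p + 1) • X ^ Kc p (n/p) m' b + (p - n % p - 1) • X ^ (1 + Gc p (n/p) m' b) := by
    intro m' hm'
    rw [Finset.mem_range] at hm'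
    have hmle : ∀ e, e < p → p * m' + e ≤ n := by
      intro e he
      have h1 : p * (m' + 1) ≤ p * (n/p) := Nat.mul_le_mul_left _ (by omega)
      have h2 : p * (m' + 1) = p * m' + p := by ring
      omega
    rw [show Finset.range p = Finset.range ((n % p + 1) + (p - n % p - 1)) from by congr 1; omega,
      Finset.sum_range_add]
    congr 1
    · rw [Finset.sum_congr rfl (fun e he => ?_), Finset.sum_const, Finset.card_range]
      rw [Finset.mem_range] at he
      rw [Kc_rec_le hp (hmle e (by omega)) (by rw [hmodd m' e (by omega)]; omega),
        hdivd m' e (by omega)]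
    · rw [Finset.sum_congr rfl (fun x hx => ?_), Finset.sum_const, Finset.card_range]
      rw [Finset.mem_range] at hx
      rw [Kc_rec_gt hp (hmle _ (by omega)) (by rw [hmodd m' _ (by omega)]; omega),
        hdivd m' _ (by omega), Nat.add_comm]
  rw [Finset.sum_congr rfl inner]
  have tail : ∀ x ∈ Finset.range (n % p + 1),
      (X:Polynomial ℤ) ^ Kc p n (p * (n/p) + x) (b+1) = X ^ Kc p (n/p) (n/p) b := by
    intro x hx
    rw [Finset.mem_range] at hx
    rw [Kc_rec_le hp (by omega) (by rw [hmodd _ x (by omega)]; omega), hdivd _ x (by omega)]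
  rw [Finset.sum_congr rfl tail, Finset.sum_const, Finset.card_range]
  rw [Tb, Sb, Finset.sum_range_succ, smul_add, Finset.smul_sum, Finset.smul_sum,
    Finset.sum_add_distrib]
  abel

lemma Sb_rec {p n : ℕ} (hp : 1 < p) (hn : 0 < n) (b : ℕ) :
    Sb p n (b+1) = (n % p) • (X * Tb p (n/p) b) + (p - n % p) • (X * Sb p (n/p) b) := by
  have hp0 : 0 < p := by omega
  have hd : n % p < p := Nat.mod_lt _ hp0
  have hnd := Nat.div_add_mod n p
  rw [Sb]
  rw [show Finset.range n = Finset.range (p * (n/p) + (n % p)) from by congr 1; omega,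
    Finset.sum_range_add, sum_range_mul]
  have hmodd : ∀ m' e : ℕ, e < p → (p * m' + e) % p = e := by
    intro m' e he
    rw [Nat.mul_add_mod]
    exact Nat.mod_eq_of_lt he
  have hdivd : ∀ m' e : ℕ, e < p → (p * m' + e) / p = m' := by
    intro m' e he
    rw [Nat.mul_add_div hp0, Nat.div_eq_of_lt he, Nat.add_zero]
  have inner : ∀ m' ∈ Finset.range (n/p),
      (∑ e ∈ Finset.range p, (X:Polynomial ℤ) ^ (1 + Gc p n (p * m' + e) (b+1)))
        = (n % p) • (X * X ^ Kc p (n/p) m' b)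
          + (p - n % p) • (X * X ^ (1 + Gc p (n/p) m' b)) := by
    intro m' hm'
    rw [Finset.mem_range] at hm'
    have hmle : ∀ e, e < p → p * m' + e ≤ n := by
      intro e he
      have h1 : p * (m' + 1) ≤ p * (n/p) := Nat.mul_le_mul_left _ (by omega)
      have h2 : p * (m' + 1) = p * m' + p := by ring
      omega
    rw [show Finset.range p = Finset.range ((n % p) + (p - n % p)) from by congr 1; omega,
      Finset.sum_range_add]
    congr 1
    · rw [Finset.sum_congr rfl (fun e he => ?_), Finset.sum_const, Finset.card_range]
      rw [Finset.mem_range] at he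
      rw [Gc_rec_lt hp (hmle e (by omega)) (by rw [hmodd m' e (by omega)]; omega),
        hdivd m' e (by omega), pow_add, pow_one]
    · rw [Finset.sum_congr rfl (fun x hx => ?_), Finset.sum_const, Finset.card_range]
      rw [Finset.mem_range] at hx
      rw [Gc_rec_ge hp (by rw [hmodd m' _ (by omega)]; omega) b, hdivd m' _ (by omega),
        show 1 + (Gc p (n/p) m' b + 1) = 1 + (1 + Gc p (n/p) m' b) from by omega,
        pow_add, pow_one]
  rw [Finset.sum_congr rfl inner]
  have tail : ∀ x ∈ Finset.range (n % p),
      (X:Polynomial ℤ) ^ (1 + Gc p n (p * (n/p) + x) (b+1))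
        = X * X ^ Kc p (n/p) (n/p) b := by
    intro x hx
    rw [Finset.mem_range] at hx
    rw [Gc_rec_lt hp (by omega) (by rw [hmodd _ x (by omega)]; omega),
      hdivd _ x (by omega), pow_add, pow_one]
  rw [Finset.sum_congr rfl tail, Finset.sum_const, Finset.card_range]
  rw [Tb, Sb, Finset.sum_range_succ, mul_add, Finset.mul_sum, Finset.mul_sum, smul_add,
    Finset.smul_sum, Finset.smul_sum, Finset.sum_add_distrib]
  abel


lemma Tb_zero (p b : ℕ) (hp : 0 < p) : Tb p 0 b = 1 := by
  rw [Tb, Finset.sum_range_one, Kc_zero b hp, pow_zero]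

lemma Sb_zero (p b : ℕ) : Sb p 0 b = 0 := by
  rw [Sb, Finset.range_zero, Finset.sum_empty]

lemma mul00 (p d : ℕ) (Q : Matrix (Fin 2) (Fin 2) (Polynomial ℤ)) :
    (M p d * Q) 0 0 = C ((d:ℤ)+1) * Q 0 0 + C ((p:ℤ)-(d:ℤ)-1) * Q 1 0 := by
  rw [Matrix.mul_apply, Fin.sum_univ_two]
  simp [M]

lemma mul10 (p d : ℕ) (Q : Matrix (Fin 2) (Fin 2) (Polynomial ℤ)) :
    (M p d * Q) 1 0 = C (d:ℤ) * X * Q 0 0 + C ((p:ℤ)-(d:ℤ)) * X * Q 1 0 := by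
  rw [Matrix.mul_apply, Fin.sum_univ_two]
  simp [M]

lemma main {p : ℕ} (hp : 1 < p) : ∀ b, ∀ n, n < p^b →
    ((Nat.digits p n).map (M p)).prod 0 0 = Tb p n (b+1)
    ∧ ((Nat.digits p n).map (M p)).prod 1 0 = Sb p n (b+1) := by
  have hzero : ∀ B, ((Nat.digits p 0).map (M p)).prod 0 0 = Tb p 0 B
      ∧ ((Nat.digits p 0).map (M p)).prod 1 0 = Sb p 0 B := by
    intro B
    rw [Tb_zero p B (by omega), Sb_zero p B]
    constructor
    · simp [Matrix.one_apply]
    · simp [Matrix.one_apply]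
  intro b
  induction b with
  | zero =>
    intro n hn
    have h0 : n = 0 := by simpa using Nat.lt_one_iff.mp (by simpa using hn)
    subst h0
    exact hzero 1
  | succ b ih =>
    intro n hn
    rcases Nat.eq_zero_or_pos n with h0 | h0
    · subst h0; exact hzero (b+2)
    have hp0 : 0 < p := by omega
    have hq : n / p < p ^ b := by
      rw [Nat.div_lt_iff_lt_mul hp0]
      rwa [← pow_succ]
    obtain ⟨ih1, ih2⟩ := ih (n/p) hq
    rw [Nat.digits_def' hp h0, List.map_cons, List.prod_cons]
    have hd : n % p < p := Nat.mod_lt _ hp0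
    have e1 : (C (((n % p : ℕ) : ℤ) + 1) : Polynomial ℤ) = ((n % p + 1 : ℕ) : Polynomial ℤ) := by
      rw [show (((n % p : ℕ) : ℤ) + 1) = ((n % p + 1 : ℕ) : ℤ) from by push_cast; ring,
        Polynomial.C_eq_natCast]
    have e2 : (C ((p : ℤ) - ((n % p : ℕ) : ℤ) - 1) : Polynomial ℤ)
        = ((p - n % p - 1 : ℕ) : Polynomial ℤ) := by
      rw [show ((p : ℤ) - ((n % p : ℕ) : ℤ) - 1) = ((p - n % p - 1 : ℕ) : ℤ) from by omega,
        Polynomial.C_eq_natCast]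
    have e3 : (C (((n % p : ℕ) : ℤ)) : Polynomial ℤ) = ((n % p : ℕ) : Polynomial ℤ) := by
      rw [Polynomial.C_eq_natCast]
    have e4 : (C ((p : ℤ) - ((n % p : ℕ) : ℤ)) : Polynomial ℤ)
        = ((p - n % p : ℕ) : Polynomial ℤ) := by
      rw [show ((p : ℤ) - ((n % p : ℕ) : ℤ)) = ((p - n % p : ℕ) : ℤ) from by omega,
        Polynomial.C_eq_natCast]
    constructor
    · rw [mul00, ih1, ih2, Tb_rec hp h0 (b+1), nsmul_eq_mul, nsmul_eq_mul, e1, e2]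
    · rw [mul10, ih1, ih2, Sb_rec hp h0 (b+1), nsmul_eq_mul, nsmul_eq_mul, e3, e4]
      ring

end TMP

theorem T_matrix_product (p : ℕ) (hp : p.Prime) (n : ℕ) :
    T p n = (((Nat.digits p n).map (M p)).prod) 0 0 := by
  haveI := Fact.mk hp
  have hp1 : 1 < p := hp.one_lt
  have hb : n < p ^ (Nat.log p n + 1) := Nat.lt_pow_succ_log_self hp1 n
  obtain ⟨h1, _⟩ := TMP.main hp1 (Nat.log p n + 1) n hb
  rw [h1, T, TMP.Tb]
  refine Finset.sum_congr rfl fun m hm => ?_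
  rw [Finset.mem_range] at hm
  congr 1
  rw [padicValNat_choose (show m ≤ n by omega) (show Nat.log p n < Nat.log p n + 1 + 1 + 1 by omega),
    Finset.card_filter, Finset.sum_Ico_eq_sum_range, Nat.add_sub_cancel, TMP.Kc]
  refine Finset.sum_congr rfl fun j _ => ?_
  rw [Nat.add_comm 1 j]
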